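/- Let A be an irreducible n×n Z-matrix that has an eigenvalue with negative real part. If u ≥ 0 and u ≠ 0, then every solution v of A v = u has at least one strictly negative component. -/

import Mathlib

theorem spec_eigvec {n : ℕ} (M : Matrix (Fin n) (Fin n) ℂ) (μ : ℂ) (h : μ ∈ spectrum ℂ M) :
    ∃ x : Fin n → ℂ, x ≠ 0 ∧ M.mulVec x = μ • x := by
  rw [spectrum.mem_iff, Matrix.isUnit_iff_isUnit_det, isUnit_iff_ne_zero, not_not,
    ← Matrix.exists_mulVec_eq_zero_iff] at h
  obtain ⟨x, hx, hx2⟩ := h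
  refine ⟨x, hx, ?_⟩
  funext i
  have h1 := congrFun hx2 i
  simp only [Matrix.mulVec, dotProduct, Matrix.sub_apply,
    Matrix.algebraMap_matrix_apply, sub_mul, Finset.sum_sub_distrib, sub_eq_zero,
    ite_mul, zero_mul] at h1
  rw [Finset.sum_ite_eq] at h1
  simp only [Finset.mem_univ, if_true] at h1
  simp only [Pi.zero_apply, Algebra.algebraMap_self_apply] at h1
  rw [sub_eq_zero] at h1
  simpa [Matrix.mulVec, dotProduct] using h1.symm

def Matrix.IsReducibleMat {n : ℕ} (A : Matrix (Fin n) (Fin n) ℝ) : Prop :=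
  ∃ I J : Set (Fin n), I.Nonempty ∧ J.Nonempty ∧ Disjoint I J ∧ I ∪ J = Set.univ ∧
    ∀ p ∈ I, ∀ q ∈ J, A p q = 0

theorem stmt_3 {n : ℕ} (A : Matrix (Fin n) (Fin n) ℝ) (u v : Fin n → ℝ)
    (hA : ∀ p q, p ≠ q → A p q ≤ 0)
    (hirr : ¬ A.IsReducibleMat)
    (hneg : ∃ μ ∈ spectrum ℂ (A.map Complex.ofReal), μ.re < 0)
    (hu : ∀ i, 0 ≤ u i) (hune : u ≠ 0)
    (hAv : A.mulVec v = u) :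
    ∃ i, v i < 0 := by
  by_contra hcon
  push_neg at hcon
  have hvne : v ≠ 0 := by
    rintro rfl
    exact hune (hAv ▸ (Matrix.mulVec_zero A).symm ▸ rfl)
  have hsumu : ∀ p, ∑ q, A p q * v q = u p := by
    intro p
    simpa [Matrix.mulVec, dotProduct] using congrFun hAv p
  have hvpos : ∀ i, 0 < v i := by
    by_contra hp
    push_neg at hp
    obtain ⟨p0, hp0⟩ := hp
    apply hirr
    refine ⟨{p | v p = 0}, {q | 0 < v q}, ⟨p0, le_antisymm hp0 (hcon p0)⟩, ?_, ?_, ?_, ?_⟩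
    · obtain ⟨j, hj⟩ := Function.ne_iff.mp hvne
      exact ⟨j, lt_of_le_of_ne (hcon j) (Ne.symm hj)⟩
    · rw [Set.disjoint_left]
      intro a ha hb
      exact absurd ha (ne_of_gt hb)
    · ext a
      simp only [Set.mem_union, Set.mem_setOf_eq, Set.mem_univ, iff_true]
      rcases eq_or_lt_of_le (hcon a) with h | h
      · exact Or.inl h.symm
      · exact Or.inr h
    · intro p hp' q hq'
      simp only [Set.mem_setOf_eq] at hp' hq'
      have hterm : ∀ r ∈ Finset.univ, A p r * v r ≤ 0 := by
        intro r _
        rcases eq_or_ne r p with rfl | hr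
        · simp [hp']
        · exact mul_nonpos_of_nonpos_of_nonneg (hA p r (Ne.symm hr)) (hcon r)
      have hz : ∑ r, A p r * v r = 0 :=
        le_antisymm (Finset.sum_nonpos hterm) ((hsumu p) ▸ hu p)
      have hq0 := (Finset.sum_eq_zero_iff_of_nonpos hterm).mp hz q (Finset.mem_univ q)
      exact (mul_eq_zero.mp hq0).resolve_right (ne_of_gt hq')
  obtain ⟨μ, hμ, hμneg⟩ := hneg
  obtain ⟨x, hx, hx2⟩ := spec_eigvec _ μ hμ
  obtain ⟨j0, hj0⟩ := Function.ne_iff.mp hx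
  have hnonempty : (Finset.univ : Finset (Fin n)).Nonempty := ⟨j0, Finset.mem_univ j0⟩
  obtain ⟨i, -, hi⟩ := Finset.exists_max_image Finset.univ
    (fun i => ‖x i‖ / v i) hnonempty
  set M0 := ‖x i‖ / v i with hM0def
  have hbound : ∀ q, ‖x q‖ ≤ M0 * v q := by
    intro q
    have h1 := hi q (Finset.mem_univ q)
    rw [(div_mul_cancel₀ (‖x q‖) (hvpos q).ne').symm]
    exact mul_le_mul_of_nonneg_right h1 (hvpos q).le
  have hM0pos : 0 < M0 := by
    have h1 : 0 < ‖x j0‖ / v j0 :=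
      div_pos (by simpa using hj0) (hvpos j0)
    exact lt_of_lt_of_le h1 (hi j0 (Finset.mem_univ j0))
  have hxi : ‖x i‖ = M0 * v i := by
    rw [hM0def, div_mul_cancel₀ _ (hvpos i).ne']
  -- diagonal dominance at i
  have hdom : ∑ q ∈ Finset.univ.erase i, (-A i q) * v q ≤ A i i * v i := by
    have h2 : (∑ q ∈ Finset.univ.erase i, A i q * v q) + A i i * v i = u i := by
      rw [Finset.sum_erase_add _ _ (Finset.mem_univ i)]
      exact hsumu i
    have h3 : ∑ q ∈ Finset.univ.erase i, (-A i q) * v q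
        = -(∑ q ∈ Finset.univ.erase i, A i q * v q) := by
      simp [neg_mul]
    rw [h3]
    linarith [hu i]
  -- eigen equation at i
  have heig : (μ - (A i i : ℂ)) * x i = ∑ q ∈ Finset.univ.erase i, (A i q : ℂ) * x q := by
    have h1 := congrFun hx2 i
    simp only [Matrix.mulVec, dotProduct, Matrix.map_apply, Pi.smul_apply,
      smul_eq_mul] at h1
    rw [← Finset.sum_erase_add _ _ (Finset.mem_univ i)] at h1
    linear_combination -h1
  -- abs estimate
  have habs : ‖μ - (A i i : ℂ)‖ * (M0 * v i) ≤ M0 * (A i i * v i) := by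
    rw [← hxi, ← norm_mul, heig]
    calc ‖∑ q ∈ Finset.univ.erase i, (A i q : ℂ) * x q‖
        ≤ ∑ q ∈ Finset.univ.erase i, ‖(A i q : ℂ) * x q‖ :=
          norm_sum_le _ _
      _ ≤ ∑ q ∈ Finset.univ.erase i, (-A i q) * (M0 * v q) := by
          apply Finset.sum_le_sum
          intro q hq
          have hqi : q ≠ i := Finset.ne_of_mem_erase hq
          have hAq : A i q ≤ 0 := hA i q (Ne.symm hqi)
          rw [norm_mul, Complex.norm_real, Real.norm_eq_abs, abs_of_nonpos hAq]
          exact mul_le_mul_of_nonneg_left (hbound q) (by linarith)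
      _ = M0 * ∑ q ∈ Finset.univ.erase i, (-A i q) * v q := by
          rw [Finset.mul_sum]; apply Finset.sum_congr rfl; intro q _; ring
      _ ≤ M0 * (A i i * v i) := mul_le_mul_of_nonneg_left hdom hM0pos.le
  have hfin : ‖μ - (A i i : ℂ)‖ ≤ A i i := by
    have hpos : 0 < M0 * v i := mul_pos hM0pos (hvpos i)
    nlinarith
  have hre := Complex.abs_re_le_norm (μ - (A i i : ℂ))
  simp only [Complex.sub_re, Complex.ofReal_re] at hre
  have : |μ.re - A i i| ≤ A i i := le_trans hre hfin
  rw [abs_le] at this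
  linarith [this.1]
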